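/- Let M be a structure in a finite relational language and let p(x̄) be a quantifier-free k-type over M. Then p supports an infinite array if and only if p is coordinate-wise non-algebraic. -/

import Mathlib

/- STATEMENT 5: Let `M` be a structure in a finite relational language and `p(x̄)` a
quantifier-free `k`-type over `M`.  Then `p` supports an infinite array if and only if `p`
is coordinate-wise non-algebraic. -/

open FirstOrder Language Set

universe u v w

namespace Stmt5

variable (L : FirstOrder.Language.{v, w})

/-- An elementary extension of `M`. -/
structure EExt (M : Type u) [L.Structure M] where
  carrier : Type u
  [str : L.Structure carrier]
  emb : M ↪ₑ[L] carrier

attribute [instance] EExt.str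

/-- The quantifier-free type of the `k`-tuple `c` over (the image of) `M`, where `g`
embeds `M` into the structure containing `c`. -/
def qfTypeOf {M : Type u} (k : ℕ) {N : Type u} [L.Structure N] (g : M → N)
    (c : Fin k → N) : Set (L.Formula (Fin k ⊕ M)) :=
  {φ | BoundedFormula.IsQF φ ∧ φ.Realize (Sum.elim c g)}

/-- `p` is a (complete) quantifier-free `k`-type over `M`: the quantifier-free type of some
`k`-tuple in some elementary extension of `M`. -/
def IsQFType (M : Type u) [L.Structure M] (k : ℕ) (p : Set (L.Formula (Fin k ⊕ M))) : Prop :=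
  ∃ (E : EExt L M) (c : Fin k → E.carrier), p = qfTypeOf L k (⇑E.emb) c

/-- `p` supports an infinite array: some elementary extension of `M` contains infinitely
many pairwise disjoint `k`-tuples realizing `p`. -/
def SupportsInfiniteArray (M : Type u) [L.Structure M] (k : ℕ)
    (p : Set (L.Formula (Fin k ⊕ M))) : Prop :=
  ∃ (E : EExt L M) (c : ℕ → Fin k → E.carrier),
    (∀ i j, i ≠ j → Disjoint (Set.range (c i)) (Set.range (c j))) ∧
    ∀ (i : ℕ), ∀ φ ∈ p, Formula.Realize φ (Sum.elim (c i) ⇑E.emb)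

/-- The formula `x_i ≠ b`, for `b ∈ M`. -/
def neqFormula {M : Type u} (k : ℕ) (i : Fin k) (b : M) : L.Formula (Fin k ⊕ M) :=
  (Term.equal (Term.var (Sum.inl i)) (Term.var (Sum.inr b))).not

/-! ### Auxiliary machinery -/

section Aux

variable {L}

/-- In a relational language, every term (with one extra `Fin 0` sort of variables)
is a variable from the main sort. -/
theorem term_eq_var' [L.IsRelational] {β : Type*} (t : L.Term (β ⊕ Fin 0)) :
    ∃ x : β, t = Term.var (Sum.inl x) := by
  cases t with
  | var z =>
    cases z with
    | inl x => exact ⟨x, rfl⟩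
    | inr i => exact i.elim0
  | func f ts => exact isEmptyElim f

/-- Realization of a quantifier-free formula only depends on the atomic data of the
valuation on the free variables. -/
theorem realize_qf_congr [L.IsRelational] {β : Type*} [DecidableEq β]
    {N N' : Type*} [L.Structure N] [L.Structure N']
    {φ : L.BoundedFormula β 0} (hφ : φ.IsQF) {v : β → N} {v' : β → N'}
    {xs : Fin 0 → N} {xs' : Fin 0 → N'}
    (heq : ∀ x ∈ φ.freeVarFinset, ∀ y ∈ φ.freeVarFinset, (v x = v y ↔ v' x = v' y))
    (hrel : ∀ (n : ℕ) (R : L.Relations n) (zs : Fin n → β),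
      (∀ i, zs i ∈ φ.freeVarFinset) →
      (Structure.RelMap R (v ∘ zs) ↔ Structure.RelMap R (v' ∘ zs))) :
    φ.Realize v xs ↔ φ.Realize v' xs' := by
  revert heq hrel
  induction hφ with
  | falsum => exact fun _ _ => Iff.rfl
  | @of_isAtomic φ h =>
    cases h with
    | equal t₁ t₂ =>
      intro heq _hrel
      obtain ⟨x₁, rfl⟩ := term_eq_var' t₁
      obtain ⟨x₂, rfl⟩ := term_eq_var' t₂
      rw [BoundedFormula.realize_bdEqual, BoundedFormula.realize_bdEqual]
      simp only [Term.realize_var, Sum.elim_inl]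
      exact heq x₁ (by simp [Term.bdEqual, Term.varFinsetLeft])
        x₂ (by simp [Term.bdEqual, Term.varFinsetLeft])
    | @rel l R ts =>
      intro _heq hrel
      have hts : ∀ i, ∃ x, ts i = Term.var (Sum.inl x) := fun i => term_eq_var' (ts i)
      choose zs hzs using hts
      have hmem : ∀ i, zs i ∈ (Relations.boundedFormula R ts).freeVarFinset := by
        intro i
        simp only [Relations.boundedFormula, BoundedFormula.freeVarFinset]
        exact Finset.mem_biUnion.2 ⟨i, Finset.mem_univ i, by simp [hzs i, Term.varFinsetLeft]⟩
      rw [BoundedFormula.realize_rel, BoundedFormula.realize_rel]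
      have h1 : (fun i => Term.realize (Sum.elim v xs) (ts i)) = v ∘ zs := by
        funext i; rw [hzs i]; simp
      have h2 : (fun i => Term.realize (Sum.elim v' xs') (ts i)) = v' ∘ zs := by
        funext i; rw [hzs i]; simp
      rw [h1, h2]
      exact hrel _ R zs hmem
  | @imp φ₁ φ₂ h₁ h₂ ih₁ ih₂ =>
    intro heq hrel
    rw [BoundedFormula.realize_imp, BoundedFormula.realize_imp]
    have e : (φ₁.imp φ₂).freeVarFinset = φ₁.freeVarFinset ∪ φ₂.freeVarFinset := rfl
    refine imp_congr (ih₁ ?_ ?_) (ih₂ ?_ ?_)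
    · intro x hx y hy
      exact heq x (by rw [e]; exact Finset.mem_union_left _ hx)
        y (by rw [e]; exact Finset.mem_union_left _ hy)
    · intro n R zs hzs
      exact hrel n R zs fun i => by rw [e]; exact Finset.mem_union_left _ (hzs i)
    · intro x hx y hy
      exact heq x (by rw [e]; exact Finset.mem_union_right _ hx)
        y (by rw [e]; exact Finset.mem_union_right _ hy)
    · intro n R zs hzs
      exact hrel n R zs fun i => by rw [e]; exact Finset.mem_union_right _ (hzs i)

variable {M : Type u} [L.Structure M] {k : ℕ}

/-- Conjunction of the formulas `f b` for `b ∈ s`. -/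
noncomputable def finsetInf {α β : Type*} {n : ℕ} (s : Finset β)
    (f : β → L.BoundedFormula α n) : L.BoundedFormula α n :=
  (s.toList.map f).foldr (· ⊓ ·) ⊤

theorem realize_finsetInf {α β : Type*} {N : Type*} [L.Structure N] {n : ℕ} (s : Finset β)
    (f : β → L.BoundedFormula α n) (v : α → N) (v' : Fin n → N) :
    (finsetInf s f).Realize v v' ↔ ∀ b ∈ s, (f b).Realize v v' := by
  simp only [finsetInf, BoundedFormula.realize_foldr_inf, List.mem_map, Finset.mem_toList,
    forall_exists_index, and_imp, forall_apply_eq_imp_iff₂]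

/-- Existential quantification after relabelling along `f`. -/
noncomputable def relExs {α β γ : Type*} [Finite γ] (f : α → β ⊕ γ) (φ : L.Formula α) :
    L.Formula β :=
  (φ.relabel f).iExs γ

theorem realize_relExs {α β γ : Type*} [Finite γ] {N : Type*} [L.Structure N]
    {f : α → β ⊕ γ} {φ : L.Formula α} {v : β → N} :
    (relExs f φ).Realize v ↔ ∃ i : γ → N, φ.Realize (fun a => Sum.elim v i (f a)) := by
  rw [relExs, Formula.realize_iExs]
  simp only [Formula.realize_relabel]
  rfl

/-- Realization of a conjunction of formulas. -/
theorem frealize_inf {α : Type*} {N : Type*} [L.Structure N]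
    {φ ψ : L.Formula α} {v : α → N} :
    (φ ⊓ ψ).Realize v ↔ φ.Realize v ∧ ψ.Realize v :=
  BoundedFormula.realize_inf

/-- Realization of a finite conjunction of formulas. -/
theorem frealize_iInf {α β : Type*} {N : Type*} [L.Structure N]
    {s : Finset β} {f : β → L.Formula α} {v : α → N} :
    Formula.Realize (finsetInf s f) v ↔ ∀ b ∈ s, Formula.Realize (f b) v :=
  realize_finsetInf s f v default

/-- The index type for atomic formulas in the variables `Fin k ⊕ A`. -/
def AtomIdx (L : FirstOrder.Language.{v, w}) {M : Type u} (k : ℕ) (A : Finset M) :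
    Type (max u w) :=
  ((Fin k ⊕ ↑A) × (Fin k ⊕ ↑A)) ⊕
    (Σ r : (Σ n, L.Relations n), (Fin r.1 → (Fin k ⊕ ↑A)))

instance atomIdx_finite [Finite (Σ n, L.Relations n)] (A : Finset M) :
    Finite (AtomIdx L k A) := by
  unfold AtomIdx
  infer_instance

/-- Inclusion of the variables `Fin k ⊕ A` into `Fin k ⊕ M`. -/
def incl (A : Finset M) : (Fin k ⊕ ↑A) → (Fin k ⊕ M) :=
  Sum.map id (fun a => (a : M))

/-- The atomic formula indexed by an element of `AtomIdx`. -/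
def atomForm (A : Finset M) : AtomIdx L k A → L.Formula (Fin k ⊕ M)
  | Sum.inl q => Term.equal (Term.var (incl A q.1)) (Term.var (incl A q.2))
  | Sum.inr r => r.1.2.formula (fun i => Term.var (incl A (r.2 i)))

theorem atomForm_isQF (A : Finset M) (a : AtomIdx L k A) :
    (atomForm (L := L) A a).IsQF := by
  cases a with
  | inl q => exact (BoundedFormula.IsAtomic.equal _ _).isQF
  | inr r => exact (BoundedFormula.IsAtomic.rel _ _).isQF

theorem realize_atomForm_inl {N : Type*} [L.Structure N] (A : Finset M)
    (u : (Fin k ⊕ M) → N) (q : (Fin k ⊕ ↑A) × (Fin k ⊕ ↑A)) :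
    (atomForm (L := L) A (Sum.inl q)).Realize u ↔ u (incl A q.1) = u (incl A q.2) := by
  show (Term.equal (Term.var (incl A q.1)) (Term.var (incl A q.2)) :
    L.Formula (Fin k ⊕ M)).Realize u ↔ _
  simp [Formula.realize_equal]

theorem realize_atomForm_inr {N : Type*} [L.Structure N] (A : Finset M)
    (u : (Fin k ⊕ M) → N) (r : Σ r : (Σ n, L.Relations n), (Fin r.1 → (Fin k ⊕ ↑A))) :
    (atomForm (L := L) A (Sum.inr r)).Realize u ↔
      Structure.RelMap r.1.2 (fun i => u (incl A (r.2 i))) := by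
  show (r.1.2.formula (fun i => Term.var (incl A (r.2 i))) :
    L.Formula (Fin k ⊕ M)).Realize u ↔ _
  simp [Formula.realize_rel]

variable [Finite (Σ n, L.Relations n)]

open scoped Classical in
/-- The complete atomic diagram of the valuation `v` over the parameter set `A`. -/
noncomputable def diagForm {N : Type*} [L.Structure N] (A : Finset M)
    (v : (Fin k ⊕ M) → N) : L.Formula (Fin k ⊕ M) :=
  letI := Fintype.ofFinite (AtomIdx L k A)
  finsetInf Finset.univ
    (fun a => if (atomForm (L := L) A a).Realize v then atomForm A a else (atomForm (L := L) A a).not)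

theorem realize_diagForm_iff {N N' : Type*} [L.Structure N] [L.Structure N'] (A : Finset M)
    (v : (Fin k ⊕ M) → N) (u : (Fin k ⊕ M) → N') :
    (diagForm (L := L) A v).Realize u ↔
      ∀ a : AtomIdx L k A, ((atomForm (L := L) A a).Realize u ↔ (atomForm (L := L) A a).Realize v) := by
  letI := Fintype.ofFinite (AtomIdx L k A)
  rw [diagForm, frealize_iInf]
  constructor
  · intro h a
    have ha := h a (Finset.mem_univ a)
    by_cases hv : (atomForm (L := L) A a).Realize v
    · rw [if_pos hv] at ha; exact iff_of_true ha hv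
    · rw [if_neg hv] at ha; rw [Formula.realize_not] at ha; exact iff_of_false ha hv
  · intro h a _
    by_cases hv : (atomForm (L := L) A a).Realize v
    · rw [if_pos hv]; exact (h a).2 hv
    · rw [if_neg hv, Formula.realize_not]; exact fun hu => hv ((h a).1 hu)

theorem realize_diagForm_self {N : Type*} [L.Structure N] (A : Finset M)
    (v : (Fin k ⊕ M) → N) : (diagForm (L := L) A v).Realize v :=
  (realize_diagForm_iff A v v).2 fun _ => Iff.rfl

/-- Any tuple realizing the atomic diagram of `v` over `A` realizes exactly the same
quantifier-free formulas with parameters in `A` as `v` does. -/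
theorem realize_congr_of_diagForm [L.IsRelational] [DecidableEq M]
    {N N' : Type*} [L.Structure N] [L.Structure N']
    {A : Finset M} {v : (Fin k ⊕ M) → N} {u : (Fin k ⊕ M) → N'}
    (hd : (diagForm (L := L) A v).Realize u) {φ : L.Formula (Fin k ⊕ M)} (hq : φ.IsQF)
    (hvar : ∀ x ∈ φ.freeVarFinset, x ∈ Set.range (incl (M := M) (k := k) A)) :
    φ.Realize u ↔ φ.Realize v := by
  have hiff := (realize_diagForm_iff A v u).1 hd
  refine realize_qf_congr hq ?_ ?_
  · intro x hx y hy
    obtain ⟨x', rfl⟩ := hvar x hx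
    obtain ⟨y', rfl⟩ := hvar y hy
    have h := hiff (Sum.inl (x', y'))
    rw [realize_atomForm_inl, realize_atomForm_inl] at h
    exact h
  · intro n R zs hzs
    have h' : ∀ i, ∃ z', incl A z' = zs i := fun i => hvar (zs i) (hzs i)
    choose zs' hzs' using h'
    have h := hiff (Sum.inr ⟨⟨n, R⟩, zs'⟩)
    rw [realize_atomForm_inr, realize_atomForm_inr] at h
    have e1 : (fun i => u (incl A (zs' i))) = u ∘ zs := by
      funext i; rw [hzs' i]; rfl
    have e2 : (fun i => v (incl A (zs' i))) = v ∘ zs := by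
      funext i; rw [hzs' i]; rfl
    rw [e1, e2] at h
    exact h

/-- The formula asserting the existence of `n` pairwise disjoint `k`-tuples, each
realizing the atomic diagram of `v` over `A`. -/
noncomputable def arrayForm {N : Type*} [L.Structure N] (A : Finset M)
    (v : (Fin k ⊕ M) → N) (n : ℕ) : L.Formula M :=
  relExs (L := L) (Sum.elim Sum.inr Sum.inl : ((Fin n × Fin k) ⊕ M) → M ⊕ (Fin n × Fin k))
    ((finsetInf (Finset.univ : Finset ((Fin n × Fin k) × (Fin n × Fin k)))
      (fun q => if q.1.1 = q.2.1 then ⊤ else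
        (Term.equal (Term.var (Sum.inl q.1)) (Term.var (Sum.inl q.2))).not)) ⊓
     (finsetInf (Finset.univ : Finset (Fin n))
      (fun j => Formula.relabel (Sum.elim (fun i => Sum.inl (j, i)) Sum.inr) (diagForm (L := L) A v))))

theorem realize_arrayForm {N N' : Type*} [L.Structure N] [L.Structure N'] (A : Finset M)
    (v : (Fin k ⊕ M) → N) (n : ℕ) (w : M → N') :
    (arrayForm (L := L) A v n).Realize w ↔
      ∃ d : Fin n → Fin k → N',
        (∀ (j j' : Fin n) (i i' : Fin k), j ≠ j' → d j i ≠ d j' i') ∧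
        (∀ j, (diagForm (L := L) A v).Realize (Sum.elim (d j) w)) := by
  rw [arrayForm, realize_relExs]
  constructor
  · rintro ⟨g, hg⟩
    have hval : (fun a => Sum.elim w g (Sum.elim Sum.inr Sum.inl a)) = Sum.elim g w := by
      funext a; cases a <;> rfl
    rw [hval, frealize_inf] at hg
    obtain ⟨h1, h2⟩ := hg
    rw [frealize_iInf] at h1
    rw [frealize_iInf] at h2
    refine ⟨fun j i => g (j, i), ?_, ?_⟩
    · intro j j' i i' hjj
      have h := h1 ((j, i), (j', i')) (Finset.mem_univ _)
      rw [if_neg hjj, Formula.realize_not, Formula.realize_equal] at h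
      simpa using h
    · intro j
      have h := h2 j (Finset.mem_univ _)
      rw [Formula.realize_relabel] at h
      have hval2 : (Sum.elim g w) ∘ (Sum.elim (fun i => Sum.inl (j, i)) Sum.inr) =
          Sum.elim (fun i => g (j, i)) w := by
        funext a; cases a <;> rfl
      rwa [hval2] at h
  · rintro ⟨d, hdist, hdiag⟩
    refine ⟨fun q => d q.1 q.2, ?_⟩
    have hval : (fun a => Sum.elim w (fun q : Fin n × Fin k => d q.1 q.2)
        (Sum.elim Sum.inr Sum.inl a)) = Sum.elim (fun q : Fin n × Fin k => d q.1 q.2) w := by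
      funext a; cases a <;> rfl
    rw [hval, frealize_inf]
    constructor
    · rw [frealize_iInf]
      intro q _
      by_cases hq : q.1.1 = q.2.1
      · rw [if_pos hq]; exact Formula.realize_top.2 trivial
      · rw [if_neg hq, Formula.realize_not, Formula.realize_equal]
        simpa using hdist q.1.1 q.2.1 q.1.2 q.2.2 hq
    · rw [frealize_iInf]
      intro j _
      rw [Formula.realize_relabel]
      have hval2 : (Sum.elim (fun q : Fin n × Fin k => d q.1 q.2) w) ∘
          (Sum.elim (fun i => Sum.inl (j, i)) Sum.inr) = Sum.elim (d j) w := by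
        funext a; cases a <;> rfl
      rw [hval2]
      exact hdiag j

end Aux

/-- A quantifier-free `k`-type over `M` supports an infinite array iff it is coordinate-wise
non-algebraic, i.e. contains `x_i ≠ b` for every variable `x_i` and every `b ∈ M`. -/
theorem supportsInfiniteArray_iff_coordinatewise_nonalgebraic
    [L.IsRelational] [Finite (Σ n, L.Relations n)]
    (M : Type u) [L.Structure M] (k : ℕ)
    (p : Set (L.Formula (Fin k ⊕ M))) (hp : IsQFType L M k p) :
    SupportsInfiniteArray L M k p ↔ ∀ (i : Fin k) (b : M), neqFormula L k i b ∈ p := by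
  classical
  obtain ⟨E₀, c₀, rfl⟩ := hp
  constructor
  · rintro ⟨E, cc, hdisj, hreal⟩ i b
    refine ⟨BoundedFormula.IsQF.not ((BoundedFormula.IsAtomic.equal _ _).isQF), ?_⟩
    rw [neqFormula, Formula.realize_not, Formula.realize_equal]
    simp only [Term.realize_var, Sum.elim_inl, Sum.elim_inr]
    intro hcb
    have hmem : (Term.equal (Term.var (Sum.inl i)) (Term.var (Sum.inr b)) :
        L.Formula (Fin k ⊕ M)) ∈ qfTypeOf L k (⇑E₀.emb) c₀ := by
      refine ⟨(BoundedFormula.IsAtomic.equal _ _).isQF, ?_⟩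
      rw [Formula.realize_equal]
      simpa using hcb
    have h0 := hreal 0 _ hmem
    have h1 := hreal 1 _ hmem
    rw [Formula.realize_equal] at h0 h1
    simp only [Term.realize_var, Sum.elim_inl, Sum.elim_inr] at h0 h1
    exact Set.disjoint_left.1 (hdisj 0 1 (by simp)) ⟨i, h0⟩ ⟨i, h1⟩
  · intro hna
    have hna' : ∀ (i : Fin k) (b : M), c₀ i ≠ E₀.emb b := by
      intro i b
      have h := (hna i b).2
      rw [neqFormula, Formula.realize_not, Formula.realize_equal] at h
      simpa using h
    rcases Nat.eq_zero_or_pos k with hk | hk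
    · subst hk
      refine ⟨E₀, fun _ => c₀, ?_, ?_⟩
      · intro i j _
        have he : Set.range c₀ = ∅ := Set.range_eq_empty c₀
        simp [he]
      · exact fun i φ hφ => hφ.2
    · -- the main construction
      -- arbitrarily large disjoint families in `E₀`, for each finite parameter set
      have harr : ∀ (A : Finset M) (n : ℕ),
          (arrayForm (L := L) A (Sum.elim c₀ ⇑E₀.emb) n).Realize (⇑E₀.emb) := by
        intro A n
        induction n with
        | zero =>
          rw [realize_arrayForm]
          exact ⟨fun j => j.elim0, fun j => j.elim0, fun j => j.elim0⟩
        | succ n ih =>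
          have hM : (arrayForm (L := L) A (Sum.elim c₀ ⇑E₀.emb) n).Realize (id : M → M) := by
            have h := E₀.emb.map_formula (arrayForm (L := L) A (Sum.elim c₀ ⇑E₀.emb) n) id
            rw [Function.comp_id] at h
            exact h.1 ih
          rw [realize_arrayForm] at hM
          obtain ⟨d, hdist, hdiag⟩ := hM
          rw [realize_arrayForm]
          refine ⟨fun j i => if h : (j : ℕ) < n then E₀.emb (d ⟨j, h⟩ i) else c₀ i, ?_, ?_⟩
          · intro j j' i i' hjj
            beta_reduce
            have hvv : (j : ℕ) ≠ (j' : ℕ) := fun hh => hjj (Fin.ext hh)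
            by_cases h1 : (j : ℕ) < n <;> by_cases h2 : (j' : ℕ) < n
            · rw [dif_pos h1, dif_pos h2]
              intro hE

              exact hdist ⟨j, h1⟩ ⟨j', h2⟩ i i'
                (Fin.ne_of_val_ne hvv) (E₀.emb.injective hE)
            · rw [dif_pos h1, dif_neg h2]
              exact fun hE => hna' i' (d ⟨j, h1⟩ i) hE.symm
            · rw [dif_neg h1, dif_pos h2]
              exact fun hE => hna' i (d ⟨j', h2⟩ i') hE
            · exact absurd (Fin.ext (by have := j.isLt; have := j'.isLt; omega)) hjj
          · intro j
            beta_reduce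
            by_cases h1 : (j : ℕ) < n
            · have e1 : Sum.elim
                  (fun i => if h : (j : ℕ) < n then E₀.emb (d ⟨j, h⟩ i) else c₀ i) (⇑E₀.emb) =
                  ⇑E₀.emb ∘ (Sum.elim (d ⟨j, h1⟩) (id : M → M)) := by
                funext a
                cases a with
                | inl ii => simp [dif_pos h1]
                | inr bb => rfl
              rw [e1]
              exact (E₀.emb.map_formula (diagForm (L := L) A (Sum.elim c₀ ⇑E₀.emb)) _).2 (hdiag ⟨j, h1⟩)
            · have e1 : Sum.elim
                  (fun i => if h : (j : ℕ) < n then E₀.emb (d ⟨j, h⟩ i) else c₀ i) (⇑E₀.emb) =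
                  Sum.elim c₀ ⇑E₀.emb := by
                funext a
                cases a with
                | inl ii => simp [dif_neg h1]
                | inr bb => rfl
              rw [e1]
              exact realize_diagForm_self A (Sum.elim c₀ ⇑E₀.emb)
      -- the ultrafilter on finite parameter sets and sizes
      letI : Nonempty E₀.carrier := ⟨c₀ ⟨0, hk⟩⟩
      haveI hbot : Filter.NeBot (Filter.atTop : Filter (Finset M × ℕ)) := Filter.atTop_neBot
      set Uf : Ultrafilter (Finset M × ℕ) := Ultrafilter.of Filter.atTop with hUfdef
      have hmemU : ∀ (A : Finset M) (n : ℕ),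
          {x : Finset M × ℕ | A ⊆ x.1 ∧ n ≤ x.2} ∈ (Uf : Filter (Finset M × ℕ)) := by
        intro A n
        have h1 : {x : Finset M × ℕ | (A, n) ≤ x} ∈ (Filter.atTop : Filter (Finset M × ℕ)) :=
          Filter.mem_atTop (A, n)
        have h2 := Ultrafilter.of_le (Filter.atTop : Filter (Finset M × ℕ)) h1
        refine Filter.mem_of_superset h2 ?_
        rintro ⟨B, m⟩ hx
        exact ⟨hx.1, hx.2⟩
      -- witnesses
      have hw : ∀ x : Finset M × ℕ, ∃ d : Fin x.2 → Fin k → E₀.carrier,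
          (∀ (j j' : Fin x.2) (i i' : Fin k), j ≠ j' → d j i ≠ d j' i') ∧
          (∀ j, (diagForm (L := L) x.1 (Sum.elim c₀ ⇑E₀.emb)).Realize (Sum.elim (d j) ⇑E₀.emb)) :=
        fun x => (realize_arrayForm x.1 (Sum.elim c₀ ⇑E₀.emb) x.2 ⇑E₀.emb).1 (harr x.1 x.2)
      choose W hWdist hWdiag using hw
      -- the ultrapower
      let Np := (Uf : Filter (Finset M × ℕ)).Product (fun _ => E₀.carrier)
      let diag : E₀.carrier ↪ₑ[L] Np :=
        { toFun := fun a => (↑(fun _ : Finset M × ℕ => a) : Np)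
          map_formula' := by
            intro n φ x
            have hcast := Ultraproduct.realize_formula_cast (u := Uf) φ (fun i _ => x i)
            exact hcast.trans Filter.eventually_const }
      refine ⟨⟨Np, diag.comp E₀.emb⟩,
        fun j i => (↑(fun x : Finset M × ℕ =>
          if h : j < x.2 then W x ⟨j, h⟩ i else c₀ i) : Np), ?_, ?_⟩
      · intro j j' hjj
        rw [Set.disjoint_left]
        rintro a ⟨i, rfl⟩ ⟨i', heq⟩
        beta_reduce at heq
        have hev : ∀ᶠ x in (Uf : Filter (Finset M × ℕ)),
            (if h : j' < x.2 then W x ⟨j', h⟩ i' else c₀ i') =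
            (if h : j < x.2 then W x ⟨j, h⟩ i else c₀ i) := Quotient.eq''.1 heq
        have h2 : ∀ᶠ x in (Uf : Filter (Finset M × ℕ)), max j j' + 1 ≤ x.2 :=
          Filter.mem_of_superset (hmemU ∅ (max j j' + 1)) (fun x hx => hx.2)
        obtain ⟨x, hfg, hsub⟩ := (hev.and h2).exists
        have hj : j < x.2 := by omega
        have hj' : j' < x.2 := by omega
        rw [dif_pos hj, dif_pos hj'] at hfg
        exact hWdist x ⟨j', hj'⟩ ⟨j, hj⟩ i' i
          (Fin.ne_of_val_ne fun hh => hjj hh.symm) hfg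
      · intro j φ hφ
        obtain ⟨hqf, hre⟩ := hφ
        set F : (Fin k ⊕ M) → (Finset M × ℕ) → E₀.carrier :=
          Sum.elim (fun i x => if h : j < x.2 then W x ⟨j, h⟩ i else c₀ i)
            (fun b _ => E₀.emb b) with hF
        set Aφ : Finset M := φ.freeVarFinset.biUnion
          (fun z => Sum.elim (fun _ => (∅ : Finset M)) (fun b => {b}) z) with hAφ
        have hev : ∀ᶠ x in (Uf : Filter (Finset M × ℕ)), φ.Realize (fun z => F z x) := by
          refine Filter.mem_of_superset (hmemU Aφ (j + 1)) ?_
          rintro x ⟨hA, hjx'⟩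
          have hjx : j < x.2 := hjx'
          show φ.Realize (fun z => F z x)
          have hvv : (fun z => F z x) = Sum.elim (W x ⟨j, hjx⟩) ⇑E₀.emb := by
            funext z
            cases z with
            | inl i => simp only [hF, Sum.elim_inl, dif_pos hjx]
            | inr b => rfl
          rw [hvv]
          refine (realize_congr_of_diagForm (hWdiag x ⟨j, hjx⟩) hqf ?_).2 hre
          intro z hz
          cases z with
          | inl i => exact ⟨Sum.inl i, rfl⟩
          | inr b =>
            have hb : b ∈ Aφ := Finset.mem_biUnion.2 ⟨Sum.inr b, hz, by simp⟩
            exact ⟨Sum.inr ⟨b, hA hb⟩, rfl⟩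
        have key := (Ultraproduct.realize_formula_cast (u := Uf) φ F).2 hev
        have hve : (Sum.elim (fun i => (↑(fun x : Finset M × ℕ =>
              if h : j < x.2 then W x ⟨j, h⟩ i else c₀ i) : Np)) (⇑(diag.comp E₀.emb)) :
              (Fin k ⊕ M) → Np) = fun z => (↑(F z) : Np) := by
          funext z
          cases z with
          | inl i => rfl
          | inr b => rfl
        exact Eq.mpr (congrArg (fun vv => Formula.Realize φ vv) hve) key
end Stmt5
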